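/- In the Clifford algebra of the Minkowski quadratic form of signature (1, 2) (i.e. D = 3 spacetime dimensions, generators γ⁰, γ¹, γ² with (γ^a)² = ±1 according to η = diag(1,-1,-1) and anticommuting), there is no invertible element U of the Clifford algebra satisfying γ^a U γ^a = -U (no sum) for all a = 0, 1, 2. -/

import Mathlib

open CliffordAlgebra

lemma stmt6_aux (Q : QuadraticMap ℝ (Fin 3 → ℝ) ℝ)
    (hsq : ∀ a : Fin 3, Q (Pi.single a 1) = (![1,-1,-1] : Fin 3 → ℝ) a)
    (hpol : ∀ a b : Fin 3, a ≠ b → QuadraticMap.polar Q (Pi.single a 1) (Pi.single b 1) = 0) :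
    ¬ ∃ U : CliffordAlgebra Q, IsUnit U ∧ ∀ a : Fin 3,
      ι Q (Pi.single a 1) * U * ι Q (Pi.single a 1) = -U := by
  rintro ⟨U, hU, h'⟩
  set γ : Fin 3 → CliffordAlgebra Q := fun a => ι Q (Pi.single a 1) with hγ
  have hsq' : ∀ a : Fin 3, γ a * γ a = algebraMap ℝ _ ((![1,-1,-1] : Fin 3 → ℝ) a) := by
    intro a; rw [hγ]; simp only; rw [ι_sq_scalar, hsq]
  have hanti : ∀ a b : Fin 3, a ≠ b → γ a * γ b = - (γ b * γ a) := by
    intro a b hab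
    have key := CliffordAlgebra.ι_mul_ι_add_swap (Q := Q) (Pi.single a 1) (Pi.single b 1)
    rw [hpol a b hab, map_zero] at key
    exact eq_neg_of_add_eq_zero_left key
  have e0 : γ 0 * γ 0 = 1 := by rw [hsq' 0]; norm_num
  have e1 : γ 1 * γ 1 = -1 := by rw [hsq' 1]; norm_num
  have e2 : γ 2 * γ 2 = -1 := by rw [hsq' 2, show (![1,-1,-1] : Fin 3 → ℝ) 2 = -1 from rfl]; norm_num
  have c0 : γ 0 * U = -(U * γ 0) := by
    have := congrArg (· * γ 0) (show γ 0 * U * γ 0 = -U from h' 0)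
    simpa [mul_assoc, e0, neg_mul] using this
  have c1 : γ 1 * U = U * γ 1 := by
    have := congrArg (· * γ 1) (show γ 1 * U * γ 1 = -U from h' 1)
    simp only [mul_assoc, e1, neg_mul, mul_neg, mul_one, neg_neg] at this
    simpa using this
  have c2 : γ 2 * U = U * γ 2 := by
    have := congrArg (· * γ 2) (show γ 2 * U * γ 2 = -U from h' 2)
    simp only [mul_assoc, e2, neg_mul, mul_neg, mul_one, neg_neg] at this
    simpa using this
  set ω := γ 0 * γ 1 * γ 2 with hω
  have h10 := hanti 1 0 (by decide)
  have h20 := hanti 2 0 (by decide)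
  have h21 := hanti 2 1 (by decide)
  have h01 := hanti 0 1 (by decide)
  have ωγ : ∀ a : Fin 3, Commute ω (γ a) := by
    intro a
    fin_cases a
    · show ω * γ 0 = γ 0 * ω
      calc γ 0 * γ 1 * γ 2 * γ 0
          = γ 0 * (γ 1 * (γ 2 * γ 0)) := by simp only [mul_assoc]
        _ = γ 0 * (γ 1 * -(γ 0 * γ 2)) := by rw [h20]
        _ = -(γ 0 * ((γ 1 * γ 0) * γ 2)) := by simp only [mul_neg, mul_assoc]
        _ = -(γ 0 * (-(γ 0 * γ 1) * γ 2)) := by rw [h10]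
        _ = γ 0 * (γ 0 * γ 1 * γ 2) := by simp only [neg_mul, mul_neg, neg_neg]
    · show ω * γ 1 = γ 1 * ω
      calc γ 0 * γ 1 * γ 2 * γ 1
          = γ 0 * (γ 1 * (γ 2 * γ 1)) := by simp only [mul_assoc]
        _ = γ 0 * (γ 1 * -(γ 1 * γ 2)) := by rw [h21]
        _ = -((γ 0 * γ 1) * (γ 1 * γ 2)) := by simp only [mul_neg, mul_assoc]
        _ = -(-(γ 1 * γ 0) * (γ 1 * γ 2)) := by rw [h01]
        _ = γ 1 * (γ 0 * γ 1 * γ 2) := by simp only [neg_mul, neg_neg, mul_assoc]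
    · show ω * γ 2 = γ 2 * ω
      calc γ 0 * γ 1 * γ 2 * γ 2
          = γ 0 * γ 1 * (γ 2 * γ 2) := by rw [mul_assoc]
        _ = (γ 2 * γ 2) * (γ 0 * γ 1) := by rw [e2]; simp
        _ = γ 2 * (γ 2 * γ 0 * γ 1) := by simp only [mul_assoc]
        _ = γ 2 * (-(γ 0 * γ 2) * γ 1) := by rw [h20]
        _ = -(γ 2 * (γ 0 * (γ 2 * γ 1))) := by simp only [neg_mul, mul_neg, mul_assoc]
        _ = -(γ 2 * (γ 0 * -(γ 1 * γ 2))) := by rw [h21]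
        _ = γ 2 * (γ 0 * γ 1 * γ 2) := by simp only [mul_neg, neg_neg, mul_assoc]
  have ωcen : ∀ x : CliffordAlgebra Q, Commute ω x := by
    intro x
    induction x using CliffordAlgebra.induction with
    | algebraMap r => exact (Algebra.commutes r ω).symm
    | ι m =>
        have hm : ι Q m = m 0 • γ 0 + m 1 • γ 1 + m 2 • γ 2 := by
          have hm' : m = m 0 • (Pi.single 0 1 : Fin 3 → ℝ) + m 1 • (Pi.single 1 1 : Fin 3 → ℝ) + m 2 • (Pi.single 2 1 : Fin 3 → ℝ) := by
            funext j; fin_cases j <;> simp [Pi.single_apply]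
          conv_lhs => rw [hm']
          simp [hγ]
        rw [hm]
        exact (((ωγ 0).smul_right _).add_right ((ωγ 1).smul_right _)).add_right
          ((ωγ 2).smul_right _)
    | mul x y hx hy => exact hx.mul_right hy
    | add x y hx hy => exact hx.add_right hy
  have hωU : ω * U = -(U * ω) := by
    calc ω * U = γ 0 * (γ 1 * (γ 2 * U)) := by simp only [hω, mul_assoc]
      _ = γ 0 * (γ 1 * (U * γ 2)) := by rw [c2]
      _ = γ 0 * ((γ 1 * U) * γ 2) := by rw [mul_assoc]
      _ = γ 0 * ((U * γ 1) * γ 2) := by rw [c1]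
      _ = (γ 0 * U) * (γ 1 * γ 2) := by simp only [mul_assoc]
      _ = (-(U * γ 0)) * (γ 1 * γ 2) := by rw [c0]
      _ = -(U * ω) := by simp only [hω, neg_mul, mul_assoc]
  have hc : ω * U = U * ω := ωcen U
  have e : U * ω = -(U * ω) := by conv_lhs => rw [← hc, hωU]
  have hz : U * ω = 0 := by
    have h2 : (2:ℝ) • (U * ω) = 0 := by
      rw [two_smul]
      nth_rewrite 1 [e]
      exact neg_add_cancel _
    exact (smul_eq_zero.mp h2).resolve_left (by norm_num)
  have hω0 : ω = 0 := by
    obtain ⟨u, rfl⟩ := hU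
    have := congrArg (fun x => (↑u⁻¹ : CliffordAlgebra Q) * x) hz
    simpa [← mul_assoc] using this
  have hωsq : ω * ω = -1 := by
    calc ω * ω = ω * γ 0 * γ 1 * γ 2 := by simp only [hω, mul_assoc]
      _ = γ 0 * ω * γ 1 * γ 2 := by rw [(ωγ 0).eq]
      _ = γ 0 * (γ 0 * γ 1 * γ 2) * γ 1 * γ 2 := by rw [hω]
      _ = (γ 0 * γ 0) * (γ 1 * ((γ 2 * γ 1) * γ 2)) := by simp only [mul_assoc]
      _ = γ 1 * (-(γ 1 * γ 2) * γ 2) := by rw [e0, h21, one_mul]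
      _ = -((γ 1 * γ 1) * (γ 2 * γ 2)) := by simp only [neg_mul, mul_neg, mul_assoc]
      _ = -1 := by rw [e1, e2]; norm_num
  rw [hω0, mul_zero] at hωsq
  exact one_ne_zero (neg_eq_zero.mp hωsq.symm)

theorem stmt6 :
    ¬ ∃ U : CliffordAlgebra (QuadraticMap.weightedSumSquares ℝ (![1, -1, -1] : Fin 3 → ℝ)),
      IsUnit U ∧ ∀ a : Fin 3,
        ι (QuadraticMap.weightedSumSquares ℝ (![1, -1, -1] : Fin 3 → ℝ)) (Pi.single a 1) * U *
          ι (QuadraticMap.weightedSumSquares ℝ (![1, -1, -1] : Fin 3 → ℝ)) (Pi.single a 1)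
          = -U := by
  apply stmt6_aux
  · intro a
    rw [QuadraticMap.weightedSumSquares_apply]
    fin_cases a <;> simp [Fin.sum_univ_three, Pi.single_apply]
  · intro a b hab
    rw [QuadraticMap.polar]
    rw [QuadraticMap.weightedSumSquares_apply, QuadraticMap.weightedSumSquares_apply,
      QuadraticMap.weightedSumSquares_apply]
    fin_cases a <;> fin_cases b <;>
      simp_all [Fin.sum_univ_three, Pi.single_apply]
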